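/- Let κ0Q, κIL, κSR, κRS, κRI, C_M, C_U > 0 with κ0Q < κIL and C_M > 1. Define s∞ = 1 − κ0Q/κIL and u∞ = (κSR/κRS)·(κRI/κ0Q)·(C_M − κ0Q/κIL)·(1 − κ0Q/κIL). If u∞ < C_U, then (s∞, u∞) ∈ (0,1) × (0, C_U) and (s∞, u∞) is the unique point in (0,1) × (0, C_U) at which both right-hand sides of the system ṡ = κRS·u·(κIL(1−s) + κSR·s)/(κRI(C_M − (1−s)) + κRS·u) − κSR·s and u̇ = κIL(1−s) − κ0Q vanish. -/

import Mathlib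

open Set

/-- Optimal sequestration regime (Theorem 4.2): under condition `u∞ < C_U`,
`(s∞, u∞)` lies in `(0,1) × (0, C_U)` and is the unique zero there of the
right-hand sides of the limiting dynamical system. -/
theorem stmt11 (κ0Q κIL κSR κRS κRI C_M C_U : ℝ)
    (hκ0Q : 0 < κ0Q) (hκIL : 0 < κIL) (hκSR : 0 < κSR) (hκRS : 0 < κRS)
    (hκRI : 0 < κRI) (hCU : 0 < C_U) (h : κ0Q < κIL) (hCM : 1 < C_M)
    (sInfty uInfty : ℝ) (hs : sInfty = 1 - κ0Q / κIL)
    (hu : uInfty = (κSR / κRS) * (κRI / κ0Q) * (C_M - κ0Q / κIL) * (1 - κ0Q / κIL))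
    (hcond : uInfty < C_U) :
    sInfty ∈ Ioo (0 : ℝ) 1 ∧ uInfty ∈ Ioo 0 C_U ∧
    (κRS * uInfty * ((κIL * (1 - sInfty) + κSR * sInfty)
        / (κRI * (C_M - (1 - sInfty)) + κRS * uInfty)) - κSR * sInfty = 0) ∧
    (κIL * (1 - sInfty) - κ0Q = 0) ∧
    (∀ s u : ℝ, s ∈ Ioo (0 : ℝ) 1 → u ∈ Ioo 0 C_U →
      κRS * u * ((κIL * (1 - s) + κSR * s)
        / (κRI * (C_M - (1 - s)) + κRS * u)) - κSR * s = 0 →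
      κIL * (1 - s) - κ0Q = 0 → s = sInfty ∧ u = uInfty) := by
  have ha0 : 0 < κ0Q / κIL := div_pos hκ0Q hκIL
  have ha1 : κ0Q / κIL < 1 := (div_lt_one hκIL).mpr h
  have hsI : sInfty ∈ Ioo (0 : ℝ) 1 := by
    constructor <;> simp [hs] <;> linarith
  have hCMa : 0 < C_M - κ0Q / κIL := by linarith
  have h1a : 0 < 1 - κ0Q / κIL := by linarith
  have huPos : 0 < uInfty := by
    rw [hu]
    exact mul_pos (mul_pos (mul_pos (div_pos hκSR hκRS) (div_pos hκRI hκ0Q)) hCMa) h1a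
  have hILne : κIL ≠ 0 := ne_of_gt hκIL
  have h0Qne : κ0Q ≠ 0 := ne_of_gt hκ0Q
  have hRSne : κRS ≠ 0 := ne_of_gt hκRS
  have hden : 0 < κRI * (C_M - (1 - sInfty)) + κRS * uInfty := by
    have : 0 < κRI * (C_M - (1 - sInfty)) := by
      apply mul_pos hκRI
      rw [hs]; linarith
    nlinarith
  refine ⟨hsI, ⟨huPos, hcond⟩, ?_, ?_, ?_⟩
  · rw [sub_eq_zero, eq_comm, ← mul_div_assoc, eq_div_iff (ne_of_gt hden)]
    rw [hs, hu]
    field_simp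
    ring
  · rw [hs]; field_simp; ring
  · rintro s u ⟨hs0, hs1⟩ ⟨hu0, huC⟩ heq1 heq2
    have hseq : s = sInfty := by
      rw [hs]
      have : κIL * s = κIL - κ0Q := by linarith [heq2]
      field_simp
      linarith
    subst hseq
    refine ⟨rfl, ?_⟩
    have hdenu : 0 < κRI * (C_M - (1 - s)) + κRS * u := by
      have : 0 < κRI * (C_M - (1 - s)) := by
        apply mul_pos hκRI; linarith
      nlinarith
    rw [sub_eq_zero, eq_comm, ← mul_div_assoc, eq_div_iff (ne_of_gt hdenu)] at heq1
    -- from heq1: κSR * s * (κRI*(C_M-(1-s)) + κRS*u) = κRS*u*(κIL*(1-s)+κSR*s)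
    -- using κIL*(1-s) = κ0Q: κSR*s*κRI*(C_M-(1-s)) = κRS*u*κ0Q
    have h1s : 1 - s = κ0Q / κIL := by rw [hs]; ring
    have hkey : κRS * u * κ0Q = κSR * s * (κRI * (C_M - (1 - s))) := by
      have hq : κIL * (1 - s) = κ0Q := by linarith [heq2]
      linear_combination -heq1 - κRS * u * hq
    rw [hs] at hkey
    rw [hu]
    field_simp at hkey ⊢
    linarith [hkey]
  done
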